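/- Let Γ be a finite connected digraph that is not a directed cycle, let G ≤ Aut(Γ) be bi-quasiprimitive on the vertex set, and suppose Γ is (G,s)-arc-transitive with s ≥ 2. Let G^+ be an index-2 subgroup of G having two orbits Δ and Δ' on the vertices, and let H be the permutation group induced by G^+ on Δ. Then the actions of G^+ on Δ and on Δ' are both faithful (the pointwise stabilizers in G^+ of Δ and of Δ' are trivial); consequently, after identifying Δ' with Δ by an element g ∈ G \ G^+ and regarding G ≤ H wr Sym(2), G^+ = Diag_φ(H × H) = {(h, h^φ) : h ∈ H} for some automorphism φ of H, and φ² is the inner automorphism of H induced by the element x ∈ H with g = (x,1)(1,2). -/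

import Mathlib

/-!
Statement 0: normal quotients of (G,s)-arc-transitive digraphs (Proposition p:quot(a)).
-/

namespace ArcTransDigraph

variable {V : Type*}

/-- The arc set of a digraph is asymmetric (in particular loopless). -/
def IsDigraph (A : V → V → Prop) : Prop := ∀ u v : V, A u v → ¬ A v u

/-- Connectivity of the underlying undirected graph. -/
def Connected (A : V → V → Prop) : Prop :=
  ∀ u v : V, Relation.ReflTransGen (fun a b => A a b ∨ A b a) u v

/-- `G` consists of automorphisms of the digraph `(V, A)`. -/
def PreservesArcs (A : V → V → Prop) (G : Subgroup (Equiv.Perm V)) : Prop :=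
  ∀ g ∈ G, ∀ u v : V, A u v → A (g u) (g v)

/-- `G` is transitive on vertices. -/
def VertexTransitive (G : Subgroup (Equiv.Perm V)) : Prop :=
  ∀ u v : V, ∃ g ∈ G, g u = v

/-- `p` is an `s`-arc of the digraph with arc set `A`. -/
def IsArcSeq (A : V → V → Prop) (s : ℕ) (p : Fin (s + 1) → V) : Prop :=
  ∀ i : Fin s, A (p i.castSucc) (p i.succ)

/-- `G` is transitive on the `s`-arcs of the digraph with arc set `A`. -/
def ArcTransitive (A : V → V → Prop) (G : Subgroup (Equiv.Perm V)) (s : ℕ) : Prop :=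
  ∀ p q : Fin (s + 1) → V, IsArcSeq A s p → IsArcSeq A s q →
    ∃ g ∈ G, ∀ i : Fin (s + 1), g (p i) = q i

/-- `N` is a subgroup of `G` which is normal in `G`. -/
def NormalIn (N G : Subgroup (Equiv.Perm V)) : Prop :=
  N ≤ G ∧ ∀ g ∈ G, ∀ x ∈ N, g * x * g⁻¹ ∈ N

/-- The digraph with arc set `B` on vertex set `α` is isomorphic to the directed cycle
`C_r→`, whose vertex set is `Z_r` with arcs `(i, i+1)`. -/
def IsoDirectedCycle {α : Type*} (B : α → α → Prop) (r : ℕ) : Prop :=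
  ∃ e : α ≃ ZMod r, ∀ a b : α, B a b ↔ e b = e a + 1

/-- `G` is bi-quasiprimitive on `V`: every nontrivial normal subgroup has at most two
orbits, and some normal subgroup has exactly two orbits. -/
def BiQuasiprimitive (G : Subgroup (Equiv.Perm V)) : Prop :=
  (∀ L : Subgroup (Equiv.Perm V), NormalIn L G → L ≠ ⊥ →
    Nat.card (Quotient (MulAction.orbitRel L V)) ≤ 2) ∧
  (∃ L : Subgroup (Equiv.Perm V), NormalIn L G ∧
    Nat.card (Quotient (MulAction.orbitRel L V)) = 2)

/-- The homomorphism `G⁺ → Sym(Δ)` induced by restriction to the invariant set `Δ`;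
its image is the permutation group `H` induced by `G⁺` on `Δ`. -/
def inducedHom (Δ : Set V) (Gp : Subgroup (Equiv.Perm V))
    (h : ∀ b ∈ Gp, ∀ v : V, v ∈ Δ ↔ b v ∈ Δ) : Gp →* Equiv.Perm ↥Δ where
  toFun b := Equiv.Perm.subtypePerm (b : Equiv.Perm V) (fun v => (h (b : Equiv.Perm V) b.2 v).symm)
  map_one' := by
    ext x
    simp [Equiv.Perm.subtypePerm]
  map_mul' a b := by
    ext x
    simp [Equiv.Perm.subtypePerm]

/-- The homomorphism `G⁺ → Sym(Δ)` recording the action of `G⁺` on `Δ'` after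
identifying `Δ'` with `Δ` by means of the element `g` (which maps `Δ` onto `Δ'`):
`b` is sent to the permutation `x ↦ g⁻¹(b(g x))` of `Δ`. -/
def conjHom (Δ Δ' : Set V) (Gp : Subgroup (Equiv.Perm V)) (g : Equiv.Perm V)
    (h' : ∀ b ∈ Gp, ∀ v : V, v ∈ Δ' ↔ b v ∈ Δ')
    (hg : ∀ v : V, v ∈ Δ ↔ g v ∈ Δ') : Gp →* Equiv.Perm ↥Δ where
  toFun b := Equiv.Perm.subtypePerm (g⁻¹ * (b : Equiv.Perm V) * g)
    (by
      intro v
      have h1 := hg v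
      have h2 := h' (b : Equiv.Perm V) b.2 (g v)
      have h3 := hg (g⁻¹ ((b : Equiv.Perm V) (g v)))
      simp only [Equiv.Perm.mul_apply]
      rw [h1, h2, h3]
      simp)
  map_one' := by
    ext x
    simp [Equiv.Perm.subtypePerm]
  map_mul' a b := by
    ext x
    simp [Equiv.Perm.subtypePerm]


private lemma card_le_two_aux {X : Type*} [Finite X] {a b c : X}
    (hle : Nat.card X ≤ 2) (hac : a ≠ c) (hbc : b ≠ c) : a = b := by
  by_contra hab
  have := Fintype.ofFinite X
  rw [Nat.card_eq_fintype_card] at hle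
  exact absurd (Fintype.two_lt_card_iff.mpr ⟨a, b, c, hab, hac, hbc⟩) (by omega)

theorem Equiv.Perm.apply_inv_self {α : Type*} (f : Equiv.Perm α) (x : α) : f (f⁻¹ x) = x :=
  (Equiv.eq_symm_apply f).mp rfl

theorem Equiv.Perm.inv_apply_self {α : Type*} (f : Equiv.Perm α) (x : α) : f⁻¹ (f x) = x :=
  Equiv.Perm.inv_eq_iff_eq.mpr rfl

/-- The pointwise stabilizer of `S` inside `Gp`, as a subgroup of `Perm V`. -/
private def ptFix {V : Type*} (Gp : Subgroup (Equiv.Perm V)) (S : Set V) :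
    Subgroup (Equiv.Perm V) where
  carrier := {x | x ∈ Gp ∧ ∀ v ∈ S, x v = v}
  one_mem' := ⟨Gp.one_mem, fun _ _ => rfl⟩
  mul_mem' := fun {x y} hx hy => ⟨Gp.mul_mem hx.1 hy.1, fun v hv => by
    simp only [Equiv.Perm.mul_apply]; rw [hy.2 v hv, hx.2 v hv]⟩
  inv_mem' := fun {x} hx => ⟨Gp.inv_mem hx.1, fun v hv => by
    calc x⁻¹ v = x⁻¹ (x v) := by rw [hx.2 v hv]
      _ = v := Equiv.Perm.inv_apply_self x v⟩

private lemma mem_ptFix {V : Type*} {Gp : Subgroup (Equiv.Perm V)} {S : Set V}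
    {x : Equiv.Perm V} : x ∈ ptFix Gp S ↔ x ∈ Gp ∧ ∀ v ∈ S, x v = v := Iff.rfl

/-- Conjugation by `g` as an automorphism of `Gp`. -/
private def conjMulEquiv {V : Type*} (Gp : Subgroup (Equiv.Perm V)) (g : Equiv.Perm V)
    (h1 : ∀ b ∈ Gp, g⁻¹ * b * g ∈ Gp) (h2 : ∀ b ∈ Gp, g * b * g⁻¹ ∈ Gp) :
    ↥Gp ≃* ↥Gp where
  toFun b := ⟨g⁻¹ * b * g, h1 b b.2⟩
  invFun b := ⟨g * b * g⁻¹, h2 b b.2⟩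
  left_inv b := Subtype.ext (by show g * (g⁻¹ * ↑b * g) * g⁻¹ = ↑b; group)
  right_inv b := Subtype.ext (by show g⁻¹ * (g * ↑b * g⁻¹) * g = ↑b; group)
  map_mul' a b := Subtype.ext
    (by show g⁻¹ * ↑(a * b) * g = (g⁻¹ * ↑a * g) * (g⁻¹ * ↑b * g)
        rw [Subgroup.coe_mul]; group)

private lemma conjMulEquiv_coe {V : Type*} (Gp : Subgroup (Equiv.Perm V)) (g : Equiv.Perm V)
    (h1 : ∀ b ∈ Gp, g⁻¹ * b * g ∈ Gp) (h2 : ∀ b ∈ Gp, g * b * g⁻¹ ∈ Gp) (b : ↥Gp) :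
    (↑(conjMulEquiv Gp g h1 h2 b) : Equiv.Perm V) = g⁻¹ * ↑b * g := rfl

theorem biquasiprimitive_diagonal_structure
    [Finite V] (A : V → V → Prop) (G Gp : Subgroup (Equiv.Perm V)) (s : ℕ)
    (Δ Δ' : Set V) (g : Equiv.Perm V)
    (hdig : IsDigraph A) (hconn : Connected A) (hAut : PreservesArcs A G)
    (hvt : VertexTransitive G) (hs : 2 ≤ s) (hat : ArcTransitive A G s)
    (hnotcyc : ∀ r : ℕ, 3 ≤ r → ¬ IsoDirectedCycle A r)
    (hbqp : BiQuasiprimitive G)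
    (hGpG : Gp ≤ G) (hidx : (Gp.subgroupOf G).index = 2)
    -- Δ and Δ' are the two orbits of G⁺ on the vertex set
    (hdis : Disjoint Δ Δ') (hcov : Δ ∪ Δ' = Set.univ)
    (hΔ : ∀ b ∈ Gp, ∀ v : V, v ∈ Δ ↔ b v ∈ Δ)
    (hΔ' : ∀ b ∈ Gp, ∀ v : V, v ∈ Δ' ↔ b v ∈ Δ')
    (htransΔ : ∀ u ∈ Δ, ∀ v ∈ Δ, ∃ b ∈ Gp, b u = v)
    (htransΔ' : ∀ u ∈ Δ', ∀ v ∈ Δ', ∃ b ∈ Gp, b u = v)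
    -- g ∈ G ∖ G⁺ interchanges Δ and Δ', and g² ∈ G⁺
    (hgG : g ∈ G) (hgnot : g ∉ Gp)
    (hgswap : ∀ v : V, v ∈ Δ ↔ g v ∈ Δ') (hg2 : g * g ∈ Gp) :
    -- the actions of G⁺ on Δ and on Δ' are faithful
    (∀ b ∈ Gp, (∀ v ∈ Δ, b v = v) → b = 1) ∧
    (∀ b ∈ Gp, (∀ v ∈ Δ', b v = v) → b = 1) ∧
    -- G⁺ = Diag_φ(H × H) for some automorphism φ of H = (inducedHom Δ Gp hΔ).range,
    -- i.e. for every b ∈ G⁺ the action of b on Δ' (transported to Δ via g) is φ of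
    -- its action on Δ; and φ² is the inner automorphism induced by the element of H
    -- corresponding to x (where g = (x,1)(1,2)), namely the permutation of Δ induced
    -- by g²
    (∃ φ : (inducedHom Δ Gp hΔ).range ≃* (inducedHom Δ Gp hΔ).range,
      (∀ b : Gp,
        (conjHom Δ Δ' Gp g hΔ' hgswap b : Equiv.Perm ↥Δ) =
          ((φ ⟨inducedHom Δ Gp hΔ b, MonoidHom.mem_range.mpr ⟨b, rfl⟩⟩ :
            (inducedHom Δ Gp hΔ).range) : Equiv.Perm ↥Δ)) ∧
      (∀ h : (inducedHom Δ Gp hΔ).range,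
        φ (φ h) =
          (⟨inducedHom Δ Gp hΔ ⟨g * g, hg2⟩,
            MonoidHom.mem_range.mpr ⟨⟨g * g, hg2⟩, rfl⟩⟩ :
              (inducedHom Δ Gp hΔ).range)⁻¹ * h *
          ⟨inducedHom Δ Gp hΔ ⟨g * g, hg2⟩,
            MonoidHom.mem_range.mpr ⟨⟨g * g, hg2⟩, rfl⟩⟩)) := by
  classical
  have hΔmem : ∀ v : V, v ∈ Δ ∨ v ∈ Δ' := by
    intro v
    have h : v ∈ Δ ∪ Δ' := by rw [hcov]; trivial
    exact h
  have hnot : ∀ v : V, v ∈ Δ → v ∈ Δ' → False := fun v h1 h2 =>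
    Set.disjoint_left.mp hdis h1 h2
  have hgswap' : ∀ v : V, v ∈ Δ' ↔ g v ∈ Δ := by
    intro v
    rw [hgswap (g v)]
    simpa [Equiv.Perm.mul_apply] using hΔ' (g * g) hg2 v
  have hginvΔ : ∀ v : V, g⁻¹ v ∈ Δ ↔ v ∈ Δ' :=
    fun v => (hgswap (g⁻¹ v)).trans (by rw [Equiv.Perm.apply_inv_self])
  have hginvΔ' : ∀ v : V, g⁻¹ v ∈ Δ' ↔ v ∈ Δ :=
    fun v => (hgswap' (g⁻¹ v)).trans (by rw [Equiv.Perm.apply_inv_self])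
  -- index-two coset lemma
  have hcoset : ∀ x ∈ G, x ∉ Gp → ∀ y ∈ G, y ∉ Gp → x⁻¹ * y ∈ Gp := by
    intro x hxG hx y hyG hy
    obtain ⟨a, ha⟩ := Subgroup.index_eq_two_iff.mp hidx
    set H := Gp.subgroupOf G with hH
    have hkey : ∀ Z : G, Z ∉ H → Z * a ∈ H := fun Z hZ =>
      (ha Z).elim (fun h => h.1) (fun h => absurd h.1 hZ)
    have hX : (⟨x, hxG⟩ : G) ∉ H := by simpa [hH, Subgroup.mem_subgroupOf] using hx
    by_contra hxy
    have hZ : (⟨x, hxG⟩ : G)⁻¹ * (⟨y, hyG⟩ : G) ∉ H := by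
      simpa [hH, Subgroup.mem_subgroupOf] using hxy
    have h1 := hkey _ hZ
    have h2 := hkey (⟨y, hyG⟩ : G) (by simpa [hH, Subgroup.mem_subgroupOf] using hy)
    have h3 : ((⟨y, hyG⟩ : G) * a) * (((⟨x, hxG⟩ : G)⁻¹ * (⟨y, hyG⟩ : G)) * a)⁻¹ ∈ H :=
      H.mul_mem h2 (H.inv_mem h1)
    have h4 : ((⟨y, hyG⟩ : G) * a) * (((⟨x, hxG⟩ : G)⁻¹ * (⟨y, hyG⟩ : G)) * a)⁻¹
        = (⟨x, hxG⟩ : G) := by group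
    rw [h4] at h3
    exact hX h3
  have hconj : ∀ b ∈ Gp, g⁻¹ * b * g ∈ Gp := by
    intro b hb
    have h1 : b * g ∉ Gp := fun h => hgnot (by simpa using Gp.mul_mem (Gp.inv_mem hb) h)
    have h := hcoset g hgG hgnot (b * g) (G.mul_mem (hGpG hb) hgG) h1
    rwa [← mul_assoc] at h
  have hconj' : ∀ b ∈ Gp, g * b * g⁻¹ ∈ Gp := by
    intro b hb
    have hg' : g⁻¹ ∉ Gp := fun h => hgnot (by simpa using Gp.inv_mem h)
    have h1 : b * g⁻¹ ∉ Gp := fun h => hg' (by simpa using Gp.mul_mem (Gp.inv_mem hb) h)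
    have h := hcoset g⁻¹ (G.inv_mem hgG) hg' (b * g⁻¹) (G.mul_mem (hGpG hb) (G.inv_mem hgG)) h1
    rwa [inv_inv, ← mul_assoc] at h
  -- core: faithfulness on Δ
  have key : ∀ b ∈ Gp, (∀ v ∈ Δ, b v = v) → b = 1 := by
    intro b hbGp hbfix
    by_contra hb1
    obtain ⟨v0, hv0ne⟩ : ∃ v : V, b v ≠ v := by
      by_contra h
      push_neg at h
      exact hb1 (Equiv.ext fun v => by simpa using h v)
    have hv0 : v0 ∈ Δ' := (hΔmem v0).resolve_left (fun h => hv0ne (hbfix v0 h))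
    have hu0 : g v0 ∈ Δ := (hgswap' v0).mp hv0
    set K : Subgroup (Equiv.Perm V) := ptFix Gp Δ with hK
    set K' : Subgroup (Equiv.Perm V) := ptFix Gp Δ' with hK'
    have cK_K' : ∀ x ∈ K, g * x * g⁻¹ ∈ K' := by
      intro x hx
      obtain ⟨hx1, hx2⟩ := mem_ptFix.mp hx
      refine mem_ptFix.mpr ⟨hconj' x hx1, fun v hv => ?_⟩
      have h1 : g⁻¹ v ∈ Δ := (hginvΔ v).mpr hv
      simp only [Equiv.Perm.mul_apply]
      rw [hx2 _ h1, Equiv.Perm.apply_inv_self]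
    have cK'_K : ∀ x ∈ K', g * x * g⁻¹ ∈ K := by
      intro x hx
      obtain ⟨hx1, hx2⟩ := mem_ptFix.mp hx
      refine mem_ptFix.mpr ⟨hconj' x hx1, fun v hv => ?_⟩
      have h1 : g⁻¹ v ∈ Δ' := (hginvΔ' v).mpr hv
      simp only [Equiv.Perm.mul_apply]
      rw [hx2 _ h1, Equiv.Perm.apply_inv_self]
    have cGpK : ∀ p ∈ Gp, ∀ x ∈ K, p * x * p⁻¹ ∈ K := by
      intro p hp x hx
      obtain ⟨hx1, hx2⟩ := mem_ptFix.mp hx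
      refine mem_ptFix.mpr ⟨Gp.mul_mem (Gp.mul_mem hp hx1) (Gp.inv_mem hp), fun v hv => ?_⟩
      have h1 : p⁻¹ v ∈ Δ := (hΔ p⁻¹ (Gp.inv_mem hp) v).mp hv
      simp only [Equiv.Perm.mul_apply]
      rw [hx2 _ h1, Equiv.Perm.apply_inv_self]
    have cGpK' : ∀ p ∈ Gp, ∀ x ∈ K', p * x * p⁻¹ ∈ K' := by
      intro p hp x hx
      obtain ⟨hx1, hx2⟩ := mem_ptFix.mp hx
      refine mem_ptFix.mpr ⟨Gp.mul_mem (Gp.mul_mem hp hx1) (Gp.inv_mem hp), fun v hv => ?_⟩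
      have h1 : p⁻¹ v ∈ Δ' := (hΔ' p⁻¹ (Gp.inv_mem hp) v).mp hv
      simp only [Equiv.Perm.mul_apply]
      rw [hx2 _ h1, Equiv.Perm.apply_inv_self]
    have commKK' : ∀ x ∈ K, ∀ y ∈ K', x * y = y * x := by
      intro x hx y hy
      have hcK : x * y * x⁻¹ * y⁻¹ ∈ K := by
        have h1 : y * x⁻¹ * y⁻¹ ∈ K := cGpK y (mem_ptFix.mp hy).1 x⁻¹ (K.inv_mem hx)
        have h2 := K.mul_mem hx h1
        have h3 : x * (y * x⁻¹ * y⁻¹) = x * y * x⁻¹ * y⁻¹ := by group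
        rwa [h3] at h2
      have hcK' : x * y * x⁻¹ * y⁻¹ ∈ K' := by
        have h1 : x * y * x⁻¹ ∈ K' := cGpK' x (mem_ptFix.mp hx).1 y hy
        exact K'.mul_mem h1 (K'.inv_mem hy)
      have hone : x * y * x⁻¹ * y⁻¹ = 1 := by
        ext v
        rcases hΔmem v with h | h
        · simpa using (mem_ptFix.mp hcK).2 v h
        · simpa using (mem_ptFix.mp hcK').2 v h
      calc x * y = (x * y * x⁻¹ * y⁻¹) * (y * x) := by group
        _ = 1 * (y * x) := by rw [hone]
        _ = y * x := one_mul _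
    set N : Subgroup (Equiv.Perm V) :=
      { carrier := {z | ∃ x ∈ K, ∃ y ∈ K', z = x * y}
        one_mem' := ⟨1, K.one_mem, 1, K'.one_mem, (one_mul 1).symm⟩
        mul_mem' := by
          rintro z w ⟨x1, hx1, y1, hy1, rfl⟩ ⟨x2, hx2, y2, hy2, rfl⟩
          refine ⟨x1 * x2, K.mul_mem hx1 hx2, y1 * y2, K'.mul_mem hy1 hy2, ?_⟩
          have hc := commKK' x2 hx2 y1 hy1
          calc x1 * y1 * (x2 * y2) = x1 * (y1 * x2) * y2 := by group
            _ = x1 * (x2 * y1) * y2 := by rw [← hc]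
            _ = x1 * x2 * (y1 * y2) := by group
        inv_mem' := by
          rintro z ⟨x, hx, y, hy, rfl⟩
          refine ⟨x⁻¹, K.inv_mem hx, y⁻¹, K'.inv_mem hy, ?_⟩
          have hc := commKK' x⁻¹ (K.inv_mem hx) y⁻¹ (K'.inv_mem hy)
          rw [mul_inv_rev]
          exact hc.symm } with hN
    have hNmem : ∀ z : Equiv.Perm V, z ∈ N ↔ ∃ x ∈ K, ∃ y ∈ K', z = x * y := fun z => Iff.rfl
    have hNle : N ≤ Gp := by
      rintro z ⟨x, hx, y, hy, rfl⟩
      exact Gp.mul_mem (mem_ptFix.mp hx).1 (mem_ptFix.mp hy).1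
    have hNG : NormalIn N G := by
      refine ⟨fun z hz => hGpG (hNle hz), ?_⟩
      intro q hqG z hz
      obtain ⟨x, hx, y, hy, rfl⟩ := (hNmem z).mp hz
      by_cases hq : q ∈ Gp
      · refine (hNmem _).mpr ⟨q * x * q⁻¹, cGpK q hq x hx, q * y * q⁻¹, cGpK' q hq y hy, ?_⟩
        group
      · have hp : g⁻¹ * q ∈ Gp := hcoset g hgG hgnot q hqG hq
        have h1 : q * x * q⁻¹ ∈ K' := by
          have h := cK_K' _ (cGpK _ hp x hx)
          have he : g * ((g⁻¹ * q) * x * (g⁻¹ * q)⁻¹) * g⁻¹ = q * x * q⁻¹ := by group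
          rwa [he] at h
        have h2 : q * y * q⁻¹ ∈ K := by
          have h := cK'_K _ (cGpK' _ hp y hy)
          have he : g * ((g⁻¹ * q) * y * (g⁻¹ * q)⁻¹) * g⁻¹ = q * y * q⁻¹ := by group
          rwa [he] at h
        have hc := commKK' _ h2 _ h1
        refine (hNmem _).mpr ⟨q * y * q⁻¹, h2, q * x * q⁻¹, h1, ?_⟩
        rw [hc]
        group
    have hNbot : N ≠ ⊥ := by
      intro h
      have hbK : b ∈ N := (hNmem b).mpr ⟨b, mem_ptFix.mpr ⟨hbGp, hbfix⟩, 1, K'.one_mem,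
        (mul_one b).symm⟩
      rw [h] at hbK
      exact hb1 (Subgroup.mem_bot.mp hbK)
    have hcard := hbqp.1 N hNG hNbot
    have horb : ∀ u v : V,
        (Quotient.mk (MulAction.orbitRel ↥N V) u = Quotient.mk (MulAction.orbitRel ↥N V) v) →
        ∃ n ∈ N, n v = u := by
      intro u v h
      have h2 : u ∈ MulAction.orbit (↥N) v := Quotient.exact h
      obtain ⟨n, hn⟩ := MulAction.mem_orbit_iff.mp h2
      exact ⟨n.1, n.2, hn⟩
    have hsep : ∀ u ∈ Δ, ∀ v ∈ Δ',
        Quotient.mk (MulAction.orbitRel ↥N V) u ≠ Quotient.mk (MulAction.orbitRel ↥N V) v := by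
      intro u hu v hv h
      obtain ⟨n, hnN, hn⟩ := horb u v h
      have h2 : n v ∈ Δ' := (hΔ' n (hNle hnN) v).mp hv
      rw [hn] at h2
      exact hnot u hu h2
    have transK' : ∀ u ∈ Δ, ∀ v ∈ Δ, ∃ y ∈ K', y u = v := by
      intro u hu v hv
      have heq : Quotient.mk (MulAction.orbitRel ↥N V) v
          = Quotient.mk (MulAction.orbitRel ↥N V) u :=
        card_le_two_aux hcard (hsep v hv v0 hv0) (hsep u hu v0 hv0)
      obtain ⟨n, hnN, hn⟩ := horb v u heq
      obtain ⟨x, hx, y, hy, rfl⟩ := (hNmem n).mp hnN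
      refine ⟨y, hy, ?_⟩
      have hyu : y u ∈ Δ := (hΔ y (mem_ptFix.mp hy).1 u).mp hu
      rw [Equiv.Perm.mul_apply, (mem_ptFix.mp hx).2 (y u) hyu] at hn
      exact hn
    have transK : ∀ u ∈ Δ', ∀ v ∈ Δ', ∃ x ∈ K, x u = v := by
      intro u hu v hv
      have heq : Quotient.mk (MulAction.orbitRel ↥N V) v
          = Quotient.mk (MulAction.orbitRel ↥N V) u :=
        card_le_two_aux hcard (fun h => hsep (g v0) hu0 v hv h.symm)
          (fun h => hsep (g v0) hu0 u hu h.symm)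
      obtain ⟨n, hnN, hn⟩ := horb v u heq
      obtain ⟨x, hx, y, hy, rfl⟩ := (hNmem n).mp hnN
      refine ⟨x, hx, ?_⟩
      rw [Equiv.Perm.mul_apply, (mem_ptFix.mp hy).2 u hu] at hn
      exact hn
    have hcross : ∃ a ∈ Δ, ∃ c ∈ Δ', A a c ∨ A c a := by
      have main : ∀ w : V, Relation.ReflTransGen (fun a b => A a b ∨ A b a) (g v0) w →
          w ∈ Δ' → ∃ a ∈ Δ, ∃ c ∈ Δ', A a c ∨ A c a := by
        intro w hw
        induction hw with
        | refl => exact fun hmem => absurd hmem (fun h => hnot _ hu0 h)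
        | @tail p q hp hpq ih =>
          intro hq
          rcases hΔmem p with hpΔ | hpΔ'
          · exact ⟨p, hpΔ, q, hq, hpq⟩
          · exact ih hpΔ'
      exact main v0 (hconn (g v0) v0) hv0
    obtain ⟨a, haΔ, c, hcΔ', hac⟩ := hcross
    rcases hac with hA | hA
    · have comp1 : ∀ w ∈ Δ', A a w := by
        intro w hw
        obtain ⟨x, hx, hxc⟩ := transK c hcΔ' w hw
        obtain ⟨hxGp, hxf⟩ := mem_ptFix.mp hx
        have h := hAut x (hGpG hxGp) a c hA
        rwa [hxf a haΔ, hxc] at h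
      have comp : ∀ u ∈ Δ, ∀ w ∈ Δ', A u w := by
        intro u hu w hw
        obtain ⟨y, hy, hya⟩ := transK' a haΔ u hu
        obtain ⟨hyGp, hyf⟩ := mem_ptFix.mp hy
        have h := hAut y (hGpG hyGp) a w (comp1 w hw)
        rwa [hya, hyf w hw] at h
      have h1 : A (g v0) v0 := comp _ hu0 _ hv0
      have h2 : A (g (g v0)) (g v0) := hAut g hgG _ _ h1
      have h3 : A (g v0) (g (g v0)) := comp _ hu0 _ ((hgswap _).mp hu0)
      exact hdig _ _ h2 h3
    · have comp1 : ∀ u ∈ Δ, A c u := by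
        intro u hu
        obtain ⟨y, hy, hya⟩ := transK' a haΔ u hu
        obtain ⟨hyGp, hyf⟩ := mem_ptFix.mp hy
        have h := hAut y (hGpG hyGp) c a hA
        rwa [hyf c hcΔ', hya] at h
      have comp : ∀ w ∈ Δ', ∀ u ∈ Δ, A w u := by
        intro w hw u hu
        obtain ⟨x, hx, hxc⟩ := transK c hcΔ' w hw
        obtain ⟨hxGp, hxf⟩ := mem_ptFix.mp hx
        have h := hAut x (hGpG hxGp) c u (comp1 u hu)
        rwa [hxc, hxf u hu] at h
      have h1 : A v0 (g v0) := comp _ hv0 _ hu0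
      have h2 : A (g v0) (g (g v0)) := hAut g hgG _ _ h1
      have h3 : A (g (g v0)) (g v0) := comp _ ((hgswap _).mp hu0) _ hu0
      exact hdig _ _ h2 h3
  -- faithfulness on Δ'
  have key' : ∀ b ∈ Gp, (∀ v ∈ Δ', b v = v) → b = 1 := by
    intro b hb hbfix
    have h1 : g * b * g⁻¹ ∈ Gp := hconj' b hb
    have h2 : ∀ v ∈ Δ, (g * b * g⁻¹) v = v := by
      intro v hv
      have hgv : g⁻¹ v ∈ Δ' := (hginvΔ' v).mpr hv
      simp only [Equiv.Perm.mul_apply]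
      rw [hbfix _ hgv, Equiv.Perm.apply_inv_self]
    have h3 := key _ h1 h2
    have h4 : b = g⁻¹ * (g * b * g⁻¹) * g := by group
    rw [h3] at h4
    simpa using h4
  refine ⟨key, key', ?_⟩
  have hinj : Function.Injective (inducedHom Δ Gp hΔ) := by
    rw [injective_iff_map_eq_one]
    intro a ha
    have hfix : ∀ v ∈ Δ, (a : Equiv.Perm V) v = v := by
      intro v hv
      have h := congrArg (fun (e : Equiv.Perm ↥Δ) => (e ⟨v, hv⟩ : V)) ha
      simpa [inducedHom, Equiv.Perm.subtypePerm_apply] using h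
    exact Subtype.ext (key a a.2 hfix)
  set ι := inducedHom Δ Gp hΔ with hι
  let e : ↥Gp ≃* ↥ι.range := MonoidHom.ofInjective hinj
  let cα : ↥Gp ≃* ↥Gp := conjMulEquiv Gp g hconj hconj'
  refine ⟨(e.symm.trans cα).trans e, ?_, ?_⟩
  · intro b
    have h1 : (⟨ι b, MonoidHom.mem_range.mpr ⟨b, rfl⟩⟩ : ↥ι.range) = e b :=
      Subtype.ext (MonoidHom.ofInjective_apply hinj).symm
    have h3 : ((((e.symm.trans cα).trans e) ⟨ι b, MonoidHom.mem_range.mpr ⟨b, rfl⟩⟩ :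
        ↥ι.range) : Equiv.Perm ↥Δ) = ι (cα b) := by
      rw [h1, MulEquiv.trans_apply, MulEquiv.trans_apply, MulEquiv.symm_apply_apply]
      exact MonoidHom.ofInjective_apply hinj
    rw [h3]
    rfl
  · intro h
    obtain ⟨bb, rfl⟩ : ∃ bb : ↥Gp, e bb = h := ⟨e.symm h, e.apply_symm_apply h⟩
    have hwe : (⟨ι ⟨g * g, hg2⟩, MonoidHom.mem_range.mpr ⟨⟨g * g, hg2⟩, rfl⟩⟩ : ↥ι.range)
        = e ⟨g * g, hg2⟩ := Subtype.ext (MonoidHom.ofInjective_apply hinj).symm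
    have hφ : ∀ x : ↥Gp, ((e.symm.trans cα).trans e) (e x) = e (cα x) := by
      intro x
      rw [MulEquiv.trans_apply, MulEquiv.trans_apply, MulEquiv.symm_apply_apply]
    rw [hφ bb, hφ (cα bb), hwe, ← map_inv, ← map_mul, ← map_mul]
    refine congrArg e (Subtype.ext ?_)
    have hl : (↑(cα (cα bb)) : Equiv.Perm V) = g⁻¹ * (g⁻¹ * ↑bb * g) * g := by
      rw [conjMulEquiv_coe, conjMulEquiv_coe]
    rw [hl]
    push_cast
    group

end ArcTransDigraph
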